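/- For every integer k, the set 𝓗 ∩ [0, k] is finite, where 𝓗 is the set of all entropies of finite simple graphs. -/

import Mathlib

noncomputable section

/-- `g : [q]^V → [q]` depends essentially on coordinate `u`: there exist two inputs that
differ only at coordinate `u` on which `g` takes different values. -/
def DependsEssentiallyOn {V : Type*} {q : ℕ} (g : (V → Fin q) → Fin q) (u : V) : Prop :=
  ∃ a b : V → Fin q, (∀ w, w ≠ u → a w = b w) ∧ g a ≠ g b

/-- The interaction graph of `f` is contained in the simple graph `G`
(viewed as the symmetric loopless digraph with arcs `(u,v)` and `(v,u)` for every edge `uv`). -/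
def IGLe {V : Type*} {q : ℕ} (G : SimpleGraph V) (f : (V → Fin q) → (V → Fin q)) : Prop :=
  ∀ u v : V, DependsEssentiallyOn (fun x => f x v) u → G.Adj u v

/-- The `q`-ary guessing number of a simple graph `G`: the maximum of `log_q |Fix(f)|`
over all `f` whose interaction graph is contained in `G`. -/
def guessing {V : Type*} (G : SimpleGraph V) (q : ℕ) : ℝ :=
  sSup {x : ℝ | ∃ f : (V → Fin q) → (V → Fin q),
    IGLe G f ∧ x = Real.logb q (Set.ncard {p : V → Fin q | f p = p})}

/-- The entropy of a simple graph: the supremum over `q ≥ 2` of its `q`-guessing numbers. -/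
def graphEntropy {V : Type*} (G : SimpleGraph V) : ℝ :=
  sSup {x : ℝ | ∃ q : ℕ, 2 ≤ q ∧ x = guessing G q}

/-- The set of all entropies of finite simple graphs. -/
def entropySet : Set ℝ := {x : ℝ | ∃ (n : ℕ) (G : SimpleGraph (Fin n)), graphEntropy G = x}

/-- A finite simple graph is entropy-minimal if no simple graph with fewer vertices has the same
fractional part of the entropy. -/
def EntropyMinimal {n : ℕ} (G : SimpleGraph (Fin n)) : Prop :=
  ∀ m : ℕ, m < n → ∀ G' : SimpleGraph (Fin m),
    Int.fract (graphEntropy G') ≠ Int.fract (graphEntropy G)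


/-- L0: a function whose essential dependencies all lie in `S` is determined by coords in `S`. -/
lemma eq_of_not_dependsOn {V : Type*} [Fintype V] {q : ℕ}
    (g : (V → Fin q) → Fin q) (S : Set V)
    (h : ∀ u, u ∉ S → ¬ DependsEssentiallyOn g u) :
    ∀ a b : V → Fin q, (∀ i ∈ S, a i = b i) → g a = g b := by
  classical
  have key : ∀ (m : ℕ) (a b : V → Fin q), (∀ i ∈ S, a i = b i) →
      (Finset.univ.filter (fun i => a i ≠ b i)).card ≤ m → g a = g b := by
    intro m
    induction m with
    | zero =>
      intro a b hS hc
      have hab : a = b := by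
        funext i
        by_contra hi
        have hmem : i ∈ Finset.univ.filter (fun i => a i ≠ b i) := by simp [hi]
        have := Finset.card_pos.mpr ⟨i, hmem⟩
        omega
      rw [hab]
    | succ m ih =>
      intro a b hS hc
      by_cases hab : a = b
      · rw [hab]
      · obtain ⟨u, hu⟩ : ∃ u, a u ≠ b u := by
          by_contra h'; push_neg at h'; exact hab (funext h')
        have huS : u ∉ S := fun hus => hu (hS u hus)
        have hnd := h u huS
        unfold DependsEssentiallyOn at hnd
        push_neg at hnd
        set a' := Function.update a u (b u) with ha'
        have h1 : g a = g a' :=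
          hnd a a' (fun w hw => by simp [ha', Function.update_of_ne hw])
        have h2 : g a' = g b := by
          apply ih a' b
          · intro i hi
            rcases eq_or_ne i u with rfl | hne
            · simp [ha']
            · simp [ha', Function.update_of_ne hne, hS i hi]
          · have hsub : (Finset.univ.filter (fun i => a' i ≠ b i)) ⊆
                (Finset.univ.filter (fun i => a i ≠ b i)).erase u := by
              intro i hi
              simp only [Finset.mem_filter, Finset.mem_univ, true_and] at hi
              rcases eq_or_ne i u with rfl | hne
              · exact absurd (by simp [ha']) hi
              · simp only [Finset.mem_erase, Finset.mem_filter, Finset.mem_univ, true_and]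
                refine ⟨hne, ?_⟩
                simpa [ha', Function.update_of_ne hne] using hi
            have hle := Finset.card_le_card hsub
            have hcu : ((Finset.univ.filter (fun i => a i ≠ b i)).erase u).card
                = (Finset.univ.filter (fun i => a i ≠ b i)).card - 1 :=
              Finset.card_erase_of_mem (by simp [hu])
            omega
        rw [h1, h2]
  intro a b hS
  exact key (Finset.univ.filter (fun i => a i ≠ b i)).card a b hS le_rfl

/-- If `g` factors through coordinates in `T`, then all dependencies are in `T`. -/
lemma dependsOn_mem_of_factor {V : Type*} {q : ℕ} (g : (V → Fin q) → Fin q) (T : Set V)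
    (h : ∀ a b : V → Fin q, (∀ i ∈ T, a i = b i) → g a = g b) {u : V}
    (hd : DependsEssentiallyOn g u) : u ∈ T := by
  by_contra hu
  obtain ⟨a, b, hab, hne⟩ := hd
  exact hne (h a b (fun i hi => hab i (fun he => hu (he ▸ hi))))

lemma logb_nat_mono {q a b : ℕ} (hq : 2 ≤ q) (h : a ≤ b) :
    Real.logb q a ≤ Real.logb q b := by
  have h1 : (1:ℝ) < q := by exact_mod_cast hq.trans_lt' one_lt_two
  rcases Nat.eq_zero_or_pos a with rfl | ha
  · rcases Nat.eq_zero_or_pos b with rfl | hb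
    · simp
    · simp only [Nat.cast_zero, Real.logb_zero]
      exact Real.logb_nonneg h1 (by exact_mod_cast hb)
  · exact (Real.logb_le_logb h1 (by exact_mod_cast ha)
      (by exact_mod_cast ha.trans_le h)).mpr (by exact_mod_cast h)

lemma logb_nat_pow {q : ℕ} (hq : 2 ≤ q) (m : ℕ) : Real.logb q ((q:ℝ)^m) = m := by
  have h1 : (1:ℝ) < q := by exact_mod_cast hq.trans_lt' one_lt_two
  rw [Real.logb_pow, Real.logb_self_eq_one h1, mul_one]


section Basic
set_option linter.unusedSectionVars false

variable {V : Type*} [Fintype V] {q : ℕ}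

/-- The defining set of the guessing number. -/
def guessSet (G : SimpleGraph V) (q : ℕ) : Set ℝ :=
  {x : ℝ | ∃ f : (V → Fin q) → (V → Fin q),
    IGLe G f ∧ x = Real.logb q (Set.ncard {p : V → Fin q | f p = p})}

lemma guessing_eq_sSup (G : SimpleGraph V) (q : ℕ) : guessing G q = sSup (guessSet G q) := rfl

lemma zero_mem_guessSet (G : SimpleGraph V) (hq : 2 ≤ q) : (0:ℝ) ∈ guessSet G q := by
  have hq0 : 0 < q := by omega
  refine ⟨fun _ _ => ⟨0, hq0⟩, ?_, ?_⟩
  · intro u v hd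
    obtain ⟨a, b, _, hne⟩ := hd
    exact absurd rfl hne
  · have : {p : V → Fin q | (fun _ : V => (⟨0, hq0⟩ : Fin q)) = p}
        = {fun _ => (⟨0, hq0⟩ : Fin q)} := by
      ext p; simp [eq_comm]
    rw [this, Set.ncard_singleton]
    simp

lemma mem_guessSet_le (G : SimpleGraph V) (hq : 2 ≤ q) {x : ℝ} (hx : x ∈ guessSet G q) :
    x ≤ (Fintype.card V : ℝ) := by
  classical
  obtain ⟨f, _, rfl⟩ := hx
  have hle : (Set.ncard {p : V → Fin q | f p = p}) ≤ q ^ Fintype.card V := by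
    have h1 : (Set.ncard {p : V → Fin q | f p = p}) ≤ (Set.univ : Set (V → Fin q)).ncard :=
      Set.ncard_le_ncard (Set.subset_univ _) Set.finite_univ
    have h2 : (Set.univ : Set (V → Fin q)).ncard = q ^ Fintype.card V := by
      rw [Set.ncard_univ, Nat.card_eq_fintype_card, Fintype.card_fun, Fintype.card_fin]
    omega
  calc Real.logb q (Set.ncard {p : V → Fin q | f p = p})
      ≤ Real.logb q ((q : ℝ) ^ Fintype.card V) := by
        have := logb_nat_mono hq hle
        have hc : ((q ^ Fintype.card V : ℕ) : ℝ) = (q:ℝ) ^ Fintype.card V := by push_cast; ring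
        rwa [hc] at this
    _ = (Fintype.card V : ℝ) := logb_nat_pow hq _

lemma guessSet_bddAbove (G : SimpleGraph V) (hq : 2 ≤ q) : BddAbove (guessSet G q) :=
  ⟨(Fintype.card V : ℝ), fun _ hx => mem_guessSet_le G hq hx⟩

lemma guessing_nonneg (G : SimpleGraph V) (hq : 2 ≤ q) : 0 ≤ guessing G q :=
  le_csSup (guessSet_bddAbove G hq) (zero_mem_guessSet G hq)

lemma guessing_le_card (G : SimpleGraph V) (hq : 2 ≤ q) :
    guessing G q ≤ (Fintype.card V : ℝ) :=
  csSup_le ⟨0, zero_mem_guessSet G hq⟩ (fun _ hx => mem_guessSet_le G hq hx)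

lemma le_guessing_of_mem (G : SimpleGraph V) (hq : 2 ≤ q) {x : ℝ} (hx : x ∈ guessSet G q) :
    x ≤ guessing G q :=
  le_csSup (guessSet_bddAbove G hq) hx

lemma guessing_le_graphEntropy (G : SimpleGraph V) (hq : 2 ≤ q) :
    guessing G q ≤ graphEntropy G := by
  apply le_csSup
  · refine ⟨(Fintype.card V : ℝ), ?_⟩
    rintro x ⟨q', hq', rfl⟩
    exact guessing_le_card G hq'
  · exact ⟨q, hq, rfl⟩

lemma graphEntropy_le_card (G : SimpleGraph V) : graphEntropy G ≤ (Fintype.card V : ℝ) := by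
  refine csSup_le ⟨guessing G 2, ⟨2, le_rfl, rfl⟩⟩ ?_
  rintro x ⟨q', hq', rfl⟩
  exact guessing_le_card G hq'

lemma graphEntropy_congr {V' : Type*} {G : SimpleGraph V} {G' : SimpleGraph V'}
    (h : ∀ q, 2 ≤ q → guessing G q = guessing G' q) : graphEntropy G = graphEntropy G' := by
  unfold graphEntropy
  congr 1
  ext x
  constructor
  · rintro ⟨q, hq, rfl⟩; exact ⟨q, hq, h q hq⟩
  · rintro ⟨q, hq, rfl⟩; exact ⟨q, hq, (h q hq).symm⟩

/-- Master comparison lemma: to compare guessing numbers it is enough to transform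
strategies with at least as many fixed points. -/
lemma guessing_le_guessing {V' : Type*} [Fintype V'] (G : SimpleGraph V) (G' : SimpleGraph V')
    (hq : 2 ≤ q)
    (H : ∀ f : (V → Fin q) → (V → Fin q), IGLe G f →
      ∃ f' : (V' → Fin q) → (V' → Fin q), IGLe G' f' ∧
        Set.ncard {p : V → Fin q | f p = p} ≤ Set.ncard {p : V' → Fin q | f' p = p}) :
    guessing G q ≤ guessing G' q := by
  apply csSup_le ⟨0, zero_mem_guessSet G hq⟩
  rintro x ⟨f, hf, rfl⟩
  obtain ⟨f', hf', hle⟩ := H f hf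
  exact le_trans (logb_nat_mono hq hle) (le_guessing_of_mem G' hq ⟨f', hf', rfl⟩)

lemma guessing_mono {G₁ G₂ : SimpleGraph V} (h : G₁ ≤ G₂) (hq : 2 ≤ q) :
    guessing G₁ q ≤ guessing G₂ q := by
  apply guessing_le_guessing _ _ hq
  intro f hf
  exact ⟨f, fun u v hd => h (hf u v hd), le_rfl⟩

/-- The coordinate functions of `f` with `IGLe G f` factor through neighborhoods. -/
lemma igle_factor {G : SimpleGraph V} {f : (V → Fin q) → (V → Fin q)} (hf : IGLe G f)
    (v : V) : ∀ a b : (V → Fin q), (∀ i, G.Adj i v → a i = b i) → f a v = f b v := by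
  intro a b hab
  exact eq_of_not_dependsOn (fun x => f x v) {u | G.Adj u v}
    (fun u hu hd => hu (hf u v hd)) a b hab

end Basic
section Embed
set_option linter.unusedSectionVars false

variable {V V' : Type*} [Fintype V] [Fintype V'] {q : ℕ}
variable {G : SimpleGraph V} {G' : SimpleGraph V'}

lemma guessing_le_of_embed (φ : V' ↪ V)
    (hadj : ∀ a b, G'.Adj a b ↔ G.Adj (φ a) (φ b))
    (hiso : ∀ v, v ∉ Set.range φ → ∀ u, ¬ G.Adj u v)
    (hq : 2 ≤ q) : guessing G q ≤ guessing G' q := by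
  classical
  have hq0 : 0 < q := by omega
  set z : Fin q := ⟨0, hq0⟩ with hz
  apply guessing_le_guessing _ _ hq
  intro f hf
  have hfac := igle_factor hf
  set ext : (V' → Fin q) → (V → Fin q) :=
    fun y v => if h : ∃ a, φ a = v then y h.choose else z with hext
  have hext_phi : ∀ (y : V' → Fin q) (a : V'), ext y (φ a) = y a := by
    intro y a
    have h : ∃ a', φ a' = φ a := ⟨a, rfl⟩
    have hc : h.choose = a := φ.injective h.choose_spec
    simp only [hext, dif_pos h, hc]
  refine ⟨fun y a => f (ext y) (φ a), ?_, ?_⟩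
  · intro u a hd
    have hmem := dependsOn_mem_of_factor _ {u' | G.Adj (φ u') (φ a)} ?_ hd
    · exact (hadj u a).mpr hmem
    · intro y₁ y₂ hagree
      apply hfac (φ a)
      intro i hi
      have hir : i ∈ Set.range φ := by
        by_contra hir
        exact hiso i hir (φ a) (G.adj_symm hi)
      obtain ⟨u', rfl⟩ := hir
      rw [hext_phi, hext_phi]
      exact hagree u' hi
  · apply Set.ncard_le_ncard_of_injOn (fun x => x ∘ φ)
    · intro x hx
      simp only [Set.mem_setOf_eq] at hx ⊢
      funext a
      have hstep : f (ext (x ∘ φ)) (φ a) = f x (φ a) := by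
        apply hfac
        intro i hi
        have hir : i ∈ Set.range φ := by
          by_contra hir
          exact hiso i hir (φ a) (G.adj_symm hi)
        obtain ⟨u', rfl⟩ := hir
        rw [hext_phi]; rfl
      simp only [Function.comp_apply]
      rw [hstep, congrFun hx (φ a)]
    · intro x₁ hx₁ x₂ hx₂ heq
      simp only [Set.mem_setOf_eq] at hx₁ hx₂
      funext v
      by_cases hv : v ∈ Set.range φ
      · obtain ⟨a, rfl⟩ := hv
        exact congrFun heq a
      · have hconst : ∀ a b : V → Fin q, f a v = f b v := by
          intro a b
          exact eq_of_not_dependsOn (fun x => f x v) ∅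
            (fun u _ hd => hiso v hv u (hf u v hd)) a b (by simp)
        calc x₁ v = f x₁ v := (congrFun hx₁ v).symm
          _ = f x₂ v := hconst _ _
          _ = x₂ v := congrFun hx₂ v

lemma embed_le_guessing (φ : V' ↪ V)
    (hadj : ∀ a b, G'.Adj a b ↔ G.Adj (φ a) (φ b))
    (hq : 2 ≤ q) : guessing G' q ≤ guessing G q := by
  classical
  have hq0 : 0 < q := by omega
  set z : Fin q := ⟨0, hq0⟩ with hz
  apply guessing_le_guessing _ _ hq
  intro f' hf'
  have hfac' := igle_factor hf'
  set f : (V → Fin q) → (V → Fin q) :=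
    fun x v => if h : ∃ a, φ a = v then f' (x ∘ φ) h.choose else z with hfdef
  have hred : ∀ (x : V → Fin q) (a : V'), f x (φ a) = f' (x ∘ φ) a := by
    intro x a
    have h : ∃ a', φ a' = φ a := ⟨a, rfl⟩
    have hc : h.choose = a := φ.injective h.choose_spec
    simp only [hfdef, dif_pos h, hc]
  refine ⟨f, ?_, ?_⟩
  · intro u v hd
    by_cases hv : ∃ a, φ a = v
    · obtain ⟨a, rfl⟩ := hv
      have hmem := dependsOn_mem_of_factor (fun x => f x (φ a))
          (φ '' {u' | G'.Adj u' a}) ?_ hd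
      · obtain ⟨u', hu', rfl⟩ := hmem
        exact (hadj u' a).mp hu'
      · intro x₁ x₂ hagree
        show f x₁ (φ a) = f x₂ (φ a)
        rw [hred, hred]
        apply hfac' a
        intro i hi
        exact hagree (φ i) ⟨i, hi, rfl⟩
    · exfalso
      have hmem := dependsOn_mem_of_factor (fun x => f x v) ∅ ?_ hd
      · simp at hmem
      · intro x₁ x₂ _
        simp only [hfdef, dif_neg hv]
  · set Ψ : (V' → Fin q) → (V → Fin q) :=
      fun y v => if h : ∃ a, φ a = v then y h.choose else z with hΨ
    have hΨφ : ∀ (y : V' → Fin q) (a : V'), Ψ y (φ a) = y a := by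
      intro y a
      have h : ∃ a', φ a' = φ a := ⟨a, rfl⟩
      have hc : h.choose = a := φ.injective h.choose_spec
      simp only [hΨ, dif_pos h, hc]
    apply Set.ncard_le_ncard_of_injOn Ψ
    · intro y hy
      simp only [Set.mem_setOf_eq] at hy ⊢
      funext v
      by_cases hv : ∃ a, φ a = v
      · obtain ⟨a, rfl⟩ := hv
        rw [hred, hΨφ]
        have : Ψ y ∘ φ = y := funext (fun b => hΨφ y b)
        rw [this, congrFun hy a]
      · simp only [hfdef, hΨ, dif_neg hv]
    · intro y₁ _ y₂ _ heq
      funext a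
      have := congrFun heq (φ a)
      rwa [hΨφ, hΨφ] at this

end Embed

section Twin
set_option linter.unusedSectionVars false

variable {V : Type*} [Fintype V] [DecidableEq V] {q : ℕ}

/-- Delete all edges at `w`. -/
def isolateAt (G : SimpleGraph V) (w : V) : SimpleGraph V where
  Adj u v := G.Adj u v ∧ u ≠ w ∧ v ≠ w
  symm := ⟨fun u v ⟨h, hu, hv⟩ => ⟨G.adj_symm h, hv, hu⟩⟩
  loopless := ⟨fun v h => G.irrefl h.1⟩

lemma isolateAt_le (G : SimpleGraph V) (w : V) : isolateAt G w ≤ G := by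
  intro u v h; exact h.1

/-- The twin lemma: if `w` has at least `deg w` many twins, then making `w`
isolated does not change the guessing number. -/
lemma guessing_isolateAt (G : SimpleGraph V) (w : V) (S : Finset V) (hwS : w ∉ S)
    (hnb : ∀ s ∈ S, ∀ u, G.Adj u s ↔ G.Adj u w)
    (hcard : {u | G.Adj u w}.ncard ≤ S.card)
    (hq : 2 ≤ q) :
    guessing G q = guessing (isolateAt G w) q := by
  classical
  refine le_antisymm ?_ (guessing_mono (isolateAt_le G w) hq)
  have hq0 : 0 < q := by omega
  set z : Fin q := ⟨0, hq0⟩ with hzdef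
  set N : Finset V := Finset.univ.filter (fun u => G.Adj u w) with hNdef
  have hNmem : ∀ u, u ∈ N ↔ G.Adj u w := by intro u; simp [hNdef]
  have hNcard : N.card ≤ S.card := by
    have hco : (↑N : Set V) = {u | G.Adj u w} := by ext u; simp [hNmem u]
    rw [← Set.ncard_coe_finset, hco]; exact hcard
  have hNS : ∀ s ∈ S, s ∉ N := by
    intro s hs hsN
    exact G.irrefl ((hnb s hs s).mpr ((hNmem s).mp hsN))
  have hwN : w ∉ N := by
    intro hw; exact G.irrefl ((hNmem w).mp hw)
  -- neighborhood characterization for twins and w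
  have hNbhd : ∀ p, (p ∈ S ∨ p = w) → ∀ u, (G.Adj u p ↔ u ∈ N) := by
    intro p hp u
    rcases hp with hp | rfl
    · rw [hnb p hp u, hNmem u]
    · rw [hNmem u]
  -- an injection from N to S
  obtain ⟨ρ0⟩ : Nonempty (↥N ↪ ↥S) := by
    apply Function.Embedding.nonempty_of_card_le
    rwa [Fintype.card_coe, Fintype.card_coe]
  clear hcard
  set ρ : V → V := fun v => if h : v ∈ N then (ρ0 ⟨v, h⟩ : V) else v with hρdef
  have hρS : ∀ ν ∈ N, ρ ν ∈ S := by
    intro ν hν; simp only [hρdef, dif_pos hν]; exact (ρ0 ⟨ν, hν⟩).2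
  have hρinj : ∀ ν ∈ N, ∀ ν' ∈ N, ρ ν = ρ ν' → ν = ν' := by
    intro ν hν ν' hν' h
    simp only [hρdef, dif_pos hν, dif_pos hν'] at h
    have := ρ0.injective (Subtype.ext h)
    exact congrArg Subtype.val this
  apply guessing_le_guessing _ _ hq
  intro f hf
  have hfac := igle_factor hf
  set zh : (V → Fin q) → (V → Fin q) := fun y v => if v ∈ N then y (ρ v) else z with hzh
  set xh : (V → Fin q) → (V → Fin q) :=
    fun y v => if v ∈ S ∨ v = w then f (zh y) v else y v with hxh
  set f' : (V → Fin q) → (V → Fin q) :=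
    fun y v => if v = w then z else if v ∈ S then
      (if h : ∃ ν, ν ∈ N ∧ ρ ν = v then y h.choose else z) else f (xh y) v with hf'def
  -- computational lemma A
  have lemA : ∀ y₁ y₂ : V → Fin q, (∀ s ∈ S, y₁ s = y₂ s) →
      ∀ p, (p ∈ S ∨ p = w) → f (zh y₁) p = f (zh y₂) p := by
    intro y₁ y₂ hag p hp
    apply hfac p
    intro i hi
    have hiN : i ∈ N := (hNbhd p hp i).mp hi
    simp only [hzh, if_pos hiN]
    exact hag (ρ i) (hρS i hiN)
  refine ⟨f', ?_, ?_⟩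
  · -- IGLe check
    intro u v hd
    by_cases hvw : v = w
    · exfalso
      have hmem := dependsOn_mem_of_factor (fun x => f' x v) ∅ ?_ hd
      · simp at hmem
      · intro x₁ x₂ _; simp only [hf'def, if_pos hvw]
    by_cases hvS : v ∈ S
    · by_cases h : ∃ ν, ν ∈ N ∧ ρ ν = v
      · have hmem := dependsOn_mem_of_factor (fun x => f' x v) {h.choose} ?_ hd
        · rw [Set.mem_singleton_iff] at hmem
          have huN : u ∈ N := hmem ▸ h.choose_spec.1
          exact ⟨(hNbhd v (Or.inl hvS) u).mpr huN, fun huw => hwN (huw ▸ huN), hvw⟩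
        · intro x₁ x₂ hag
          simp only [hf'def, if_neg hvw, if_pos hvS, dif_pos h]
          exact hag h.choose rfl
      · exfalso
        have hmem := dependsOn_mem_of_factor (fun x => f' x v) ∅ ?_ hd
        · simp at hmem
        · intro x₁ x₂ _; simp only [hf'def, if_neg hvw, if_pos hvS, dif_neg h]
    · -- main case
      set T : Set V := {i | (G.Adj i v ∧ i ∉ S ∧ i ≠ w) ∨
          (i ∈ S ∧ ∃ p, G.Adj p v ∧ (p ∈ S ∨ p = w))} with hT
      have hmem := dependsOn_mem_of_factor (fun x => f' x v) T ?_ hd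
      · rcases hmem with ⟨hadj, huS, huw⟩ | ⟨huS, p, hpv, hpSw⟩
        · exact ⟨hadj, huw, hvw⟩
        · have hvN : v ∈ N := (hNbhd p hpSw v).mp (G.adj_symm hpv)
          have hadj : G.Adj v u := (hNbhd u (Or.inl huS) v).mpr hvN
          refine ⟨G.adj_symm hadj, ?_, hvw⟩
          intro huw; exact hwS (huw ▸ huS)
      · intro y₁ y₂ hag
        simp only [hf'def, if_neg hvw, if_neg hvS]
        apply hfac v
        intro i hi
        by_cases hiSw : i ∈ S ∨ i = w
        · simp only [hxh, if_pos hiSw]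
          apply lemA _ _ ?_ i hiSw
          intro s hs
          exact hag s (Or.inr ⟨hs, i, hi, hiSw⟩)
        · simp only [hxh, if_neg hiSw]
          push_neg at hiSw
          exact hag i (Or.inl ⟨hi, hiSw.1, hiSw.2⟩)
  · -- fixed points
    set Φ : (V → Fin q) → (V → Fin q) :=
      fun x v => if v = w then z else if v ∈ S then
        (if h : ∃ ν, ν ∈ N ∧ ρ ν = v then x h.choose else z) else x v with hΦ
    -- Fact B
    have factB : ∀ (x : V → Fin q), ∀ i ∈ N, zh (Φ x) i = x i := by
      intro x i hiN
      simp only [hzh, if_pos hiN]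
      have hρiS : ρ i ∈ S := hρS i hiN
      have hρiw : ρ i ≠ w := fun h => hwS (h ▸ hρiS)
      have h : ∃ ν, ν ∈ N ∧ ρ ν = ρ i := ⟨i, hiN, rfl⟩
      simp only [hΦ, if_neg hρiw, if_pos hρiS, dif_pos h]
      have := hρinj h.choose h.choose_spec.1 i hiN h.choose_spec.2
      rw [this]
    -- Fact C
    have factC : ∀ x : V → Fin q, f x = x → ∀ p, (p ∈ S ∨ p = w) →
        f (zh (Φ x)) p = x p := by
      intro x hx p hp
      have h1 : f (zh (Φ x)) p = f x p := by
        apply hfac p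
        intro i hi
        exact factB x i ((hNbhd p hp i).mp hi)
      rw [h1, congrFun hx p]
    apply Set.ncard_le_ncard_of_injOn Φ
    · intro x hx
      simp only [Set.mem_setOf_eq] at hx ⊢
      funext v
      by_cases hvw : v = w
      · simp only [hf'def, hΦ, if_pos hvw]
      by_cases hvS : v ∈ S
      · simp only [hf'def, hΦ, if_neg hvw, if_pos hvS]
        by_cases h : ∃ ν, ν ∈ N ∧ ρ ν = v
        · simp only [dif_pos h]
          have hcN : h.choose ∈ N := h.choose_spec.1
          have hcw : h.choose ≠ w := fun he => hwN (he ▸ hcN)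
          have hcS : h.choose ∉ S := fun he => hNS h.choose he hcN
          simp only [hΦ, if_neg hcw, if_neg hcS]
        · simp only [dif_neg h]
      · simp only [hf'def, hΦ, if_neg hvw, if_neg hvS]
        have h1 : f (xh (Φ x)) v = f x v := by
          apply hfac v
          intro i hi
          by_cases hiSw : i ∈ S ∨ i = w
          · simp only [hxh, if_pos hiSw]
            exact factC x hx i hiSw
          · push_neg at hiSw
            simp only [hxh, if_neg (not_or.mpr ⟨hiSw.1, hiSw.2⟩), hΦ,
              if_neg hiSw.2, if_neg hiSw.1]
        rw [h1, congrFun hx v]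
    · intro x₁ hx₁ x₂ hx₂ heq
      simp only [Set.mem_setOf_eq] at hx₁ hx₂
      funext v
      by_cases hvSw : v ∈ S ∨ v = w
      · rw [← factC x₁ hx₁ v hvSw, ← factC x₂ hx₂ v hvSw, heq]
      · push_neg at hvSw
        have h1 := congrFun heq v
        simpa only [hΦ, if_neg hvSw.2, if_neg hvSw.1] using h1

end Twin

section Cover
set_option linter.unusedSectionVars false

variable {V : Type*} [Fintype V] [DecidableEq V]

/-- Greedy maximal matching: a vertex cover that is paired up by an involution
along edges. -/
lemma exists_matched_cover (G : SimpleGraph V) :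
    ∃ (C : Finset V) (π : V → V),
      (∀ u v, G.Adj u v → u ∈ C ∨ v ∈ C) ∧
      (∀ v ∈ C, π v ∈ C ∧ π v ≠ v ∧ G.Adj v (π v) ∧ π (π v) = v) := by
  classical
  have key : ∀ (m : ℕ) (A : Finset V), A.card ≤ m →
      ∃ (C : Finset V) (π : V → V), C ⊆ A ∧
        (∀ u v, G.Adj u v → u ∈ A → v ∈ A → u ∈ C ∨ v ∈ C) ∧
        (∀ v ∈ C, π v ∈ C ∧ π v ≠ v ∧ G.Adj v (π v) ∧ π (π v) = v) := by
    intro m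
    induction m with
    | zero =>
      intro A hA
      refine ⟨∅, id, Finset.empty_subset _, ?_, by simp⟩
      intro u v _ hu _
      exfalso
      have : A = ∅ := Finset.card_eq_zero.mp (Nat.le_zero.mp hA)
      rw [this] at hu
      exact absurd hu (Finset.notMem_empty u)
    | succ m ih =>
      intro A hA
      by_cases hedge : ∃ u ∈ A, ∃ v ∈ A, G.Adj u v
      · obtain ⟨u, hu, v, hv, huv⟩ := hedge
        have hne : u ≠ v := G.ne_of_adj huv
        set A' := (A.erase u).erase v with hA'
        have hcard' : A'.card ≤ m := by
          have h1 : A'.card ≤ (A.erase u).card := Finset.card_erase_le.trans le_rfl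
          have h2 : (A.erase u).card = A.card - 1 := Finset.card_erase_of_mem hu
          have h3 : 1 ≤ A.card := Finset.card_pos.mpr ⟨u, hu⟩
          omega
        obtain ⟨C', π', hC'A, hcov', hπ'⟩ := ih A' hcard'
        have huC' : u ∉ C' := by
          intro h
          have := hC'A h
          simp [hA', hne] at this
        have hvC' : v ∉ C' := by
          intro h
          have := hC'A h
          simp [hA'] at this
        refine ⟨insert u (insert v C'), fun x => if x = u then v else if x = v then u else π' x,
          ?_, ?_, ?_⟩
        · intro x hx
          simp only [Finset.mem_insert] at hx
          rcases hx with rfl | rfl | hx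
          · exact hu
          · exact hv
          · exact (Finset.mem_erase.mp (Finset.mem_erase.mp (hC'A hx)).2).2
        · intro a b hab haA hbA
          by_cases hau : a = u ∨ a = v
          · left
            rcases hau with rfl | rfl <;> simp
          by_cases hbu : b = u ∨ b = v
          · right
            rcases hbu with rfl | rfl <;> simp
          push_neg at hau hbu
          have haA' : a ∈ A' := by simp [hA', hau.1, hau.2, haA]
          have hbA' : b ∈ A' := by simp [hA', hbu.1, hbu.2, hbA]
          rcases hcov' a b hab haA' hbA' with h | h
          · left; simp [h]
          · right; simp [h]
        · intro x hx
          simp only [Finset.mem_insert] at hx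
          rcases hx with rfl | rfl | hx
          · simp [hne, hne.symm, huv]
          · simp [hne, hne.symm, huv.symm]
          · have hxu : x ≠ u := fun h => huC' (h ▸ hx)
            have hxv : x ≠ v := fun h => hvC' (h ▸ hx)
            obtain ⟨h1, h2, h3, h4⟩ := hπ' x hx
            have hπxu : π' x ≠ u := fun h => huC' (h ▸ h1)
            have hπxv : π' x ≠ v := fun h => hvC' (h ▸ h1)
            simp only [if_neg hxu, if_neg hxv, if_neg hπxu, if_neg hπxv, Finset.mem_insert]
            exact ⟨Or.inr (Or.inr h1), h2, h3, h4⟩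
      · push_neg at hedge
        refine ⟨∅, id, Finset.empty_subset _, ?_, by simp⟩
        intro a b hab haA hbA
        exact absurd hab (hedge a haA b hbA)
  obtain ⟨C, π, _, hcov, hπ⟩ := key (Finset.univ.card) Finset.univ le_rfl
  exact ⟨C, π, fun u v h => hcov u v h (Finset.mem_univ u) (Finset.mem_univ v), hπ⟩

/-- Lower bound on the guessing number from a matched cover. -/
lemma matched_cover_le_guessing [LinearOrder V] (G : SimpleGraph V)
    (C : Finset V) (π : V → V)
    (hπ : ∀ v ∈ C, π v ∈ C ∧ π v ≠ v ∧ G.Adj v (π v) ∧ π (π v) = v)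
    {q : ℕ} (hq : 2 ≤ q) :
    ∃ R : Finset V, C.card ≤ 2 * R.card ∧ (R.card : ℝ) ≤ guessing G q := by
  classical
  have hq0 : 0 < q := by omega
  set z : Fin q := ⟨0, hq0⟩ with hz
  set R : Finset V := C.filter (fun v => v < π v) with hR
  have hRC : R ⊆ C := Finset.filter_subset _ _
  have hRmem : ∀ v, v ∈ R ↔ v ∈ C ∧ v < π v := by intro v; simp [hR]
  refine ⟨R, ?_, ?_⟩
  · -- C.card ≤ 2 * R.card
    have hsub : C ⊆ R ∪ R.image π := by
      intro v hv
      obtain ⟨h1, h2, h3, h4⟩ := hπ v hv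
      rcases lt_or_gt_of_ne h2.symm with hlt | hgt
      · exact Finset.mem_union_left _ ((hRmem v).mpr ⟨hv, hlt⟩)
      · apply Finset.mem_union_right
        apply Finset.mem_image.mpr
        refine ⟨π v, (hRmem (π v)).mpr ⟨h1, ?_⟩, h4⟩
        rw [h4]; exact hgt
    calc C.card ≤ (R ∪ R.image π).card := Finset.card_le_card hsub
      _ ≤ R.card + (R.image π).card := Finset.card_union_le _ _
      _ ≤ R.card + R.card := by
          have := Finset.card_image_le (f := π) (s := R)
          omega
      _ = 2 * R.card := by ring
  · -- guessing number lower bound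
    set f : (V → Fin q) → (V → Fin q) :=
      fun x v => if v ∈ C then x (π v) else z with hf
    have hIG : IGLe G f := by
      intro u v hd
      by_cases hvC : v ∈ C
      · have hmem := dependsOn_mem_of_factor (fun x => f x v) {π v} ?_ hd
        · rw [Set.mem_singleton_iff] at hmem
          rw [hmem]
          exact G.adj_symm (hπ v hvC).2.2.1
        · intro a b hab
          simp only [hf, if_pos hvC]
          exact hab (π v) rfl
      · exfalso
        have hmem := dependsOn_mem_of_factor (fun x => f x v) ∅ ?_ hd
        · simp at hmem
        · intro a b _; simp only [hf, if_neg hvC]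
    set Ψ : (↥R → Fin q) → (V → Fin q) :=
      fun c v => if h : v ∈ R then c ⟨v, h⟩ else
        if h2 : v ∈ C ∧ π v ∈ R then c ⟨π v, h2.2⟩ else z with hΨ
    have hΨR : ∀ (c : ↥R → Fin q) (r : ↥R), Ψ c (r : V) = c r := by
      intro c r
      simp only [hΨ, dif_pos r.2]
    have hrange : Set.range Ψ ⊆ {p : V → Fin q | f p = p} := by
      rintro _ ⟨c, rfl⟩
      simp only [Set.mem_setOf_eq]
      funext v
      by_cases hvC : v ∈ C
      · obtain ⟨h1, h2, h3, h4⟩ := hπ v hvC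
        simp only [hf, if_pos hvC]
        by_cases hvR : v ∈ R
        · -- π v ∉ R, π (π v) = v ∈ R
          have hπvR : π v ∉ R := by
            intro hmem
            have hv1 := ((hRmem v).mp hvR).2
            have hv2 := ((hRmem (π v)).mp hmem).2
            rw [h4] at hv2
            exact absurd hv1 (not_lt.mpr hv2.le)
          have hcond : π v ∈ C ∧ π (π v) ∈ R := by rw [h4]; exact ⟨h1, hvR⟩
          simp only [hΨ, dif_neg hπvR, dif_pos hcond, dif_pos hvR]
          congr 1
          exact Subtype.ext h4
        · by_cases hπvR : π v ∈ R
          · simp only [hΨ, dif_pos hπvR, dif_neg hvR, dif_pos (And.intro hvC hπvR)]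
          · have hc2 : ¬(π v ∈ C ∧ π (π v) ∈ R) := by
              rw [h4]; exact fun hh => hvR hh.2
            simp only [hΨ, dif_neg hπvR, dif_neg hvR, dif_neg hc2,
              dif_neg (fun hh : v ∈ C ∧ π v ∈ R => hπvR hh.2)]
      · have hvR : v ∉ R := fun h => hvC (hRC h)
        simp only [hf, if_neg hvC, hΨ, dif_neg hvR,
          dif_neg (fun hh : v ∈ C ∧ π v ∈ R => hvC hh.1)]
    have hinj : Function.Injective Ψ := by
      intro c₁ c₂ h
      funext r
      have := congrFun h (r : V)
      rwa [hΨR, hΨR] at this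
    have hcount : q ^ R.card ≤ Set.ncard {p : V → Fin q | f p = p} := by
      have h1 : (Set.range Ψ).ncard ≤ Set.ncard {p : V → Fin q | f p = p} :=
        Set.ncard_le_ncard hrange (Set.toFinite _)
      have h2 : (Set.range Ψ).ncard = q ^ R.card := by
        rw [← Nat.card_coe_set_eq, Nat.card_range_of_injective hinj,
          Nat.card_eq_fintype_card, Fintype.card_fun, Fintype.card_coe, Fintype.card_fin]
      omega
    have hlogb : (R.card : ℝ) ≤ Real.logb q (Set.ncard {p : V → Fin q | f p = p}) := by
      have := logb_nat_mono hq hcount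
      have hc : ((q ^ R.card : ℕ) : ℝ) = (q:ℝ) ^ R.card := by push_cast; ring
      rw [hc, logb_nat_pow hq] at this
      exact this
    exact hlogb.trans (le_guessing_of_mem G hq ⟨f, hIG, rfl⟩)

end Cover

section Reduce

/-- A graph on `Fin n` has the same entropy as a graph on its set of non-isolated
vertices. -/
lemma exists_smaller {n : ℕ} (M : ℕ) (G : SimpleGraph (Fin n))
    (hni : {v | ∃ u, G.Adj u v}.ncard ≤ M) :
    ∃ (m : ℕ) (G' : SimpleGraph (Fin m)), m ≤ M ∧ graphEntropy G' = graphEntropy G := by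
  classical
  set NI : Finset (Fin n) := Finset.univ.filter (fun v => ∃ u, G.Adj u v) with hNI
  have hNIcoe : (↑NI : Set (Fin n)) = {v | ∃ u, G.Adj u v} := by ext v; simp [hNI]
  have hNIcard : NI.card ≤ M := by
    rw [← Set.ncard_coe_finset, hNIcoe]; exact hni
  set m := NI.card with hm
  set e := NI.orderIsoOfFin rfl with he
  set φ : Fin m ↪ Fin n :=
    ⟨fun i => (e i : Fin n), fun i j h => e.injective (Subtype.ext h)⟩ with hφ
  have hrange : ∀ v : Fin n, v ∈ Set.range φ ↔ v ∈ NI := by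
    intro v
    constructor
    · rintro ⟨i, rfl⟩; exact (e i).2
    · intro hv
      exact ⟨e.symm ⟨v, hv⟩, congrArg Subtype.val (e.apply_symm_apply ⟨v, hv⟩)⟩
  set G' : SimpleGraph (Fin m) :=
    { Adj := fun a b => G.Adj (φ a) (φ b)
      symm := ⟨fun a b h => G.adj_symm h⟩
      loopless := ⟨fun a h => G.irrefl h⟩ } with hG'
  refine ⟨m, G', hNIcard, ?_⟩
  apply graphEntropy_congr
  intro q hq
  have hadj : ∀ a b, G'.Adj a b ↔ G.Adj (φ a) (φ b) := fun a b => Iff.rfl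
  have hiso : ∀ v, v ∉ Set.range φ → ∀ u, ¬ G.Adj u v := by
    intro v hv u hadj'
    exact hv ((hrange v).mpr (by simp [hNI]; exact ⟨u, hadj'⟩))
  exact le_antisymm (embed_le_guessing φ hadj hq) (guessing_le_of_embed φ hadj hiso hq)

lemma main_reduce (K : ℕ) : ∀ (j n : ℕ) (G : SimpleGraph (Fin n)),
    {v | ∃ u, G.Adj u v}.ncard ≤ j → graphEntropy G ≤ (K : ℝ) →
    ∃ (m : ℕ) (G' : SimpleGraph (Fin m)),
      m ≤ 2*K + 2*K * 2^(2*K) ∧ graphEntropy G' = graphEntropy G := by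
  intro j
  induction j with
  | zero =>
    intro n G hni _
    exact exists_smaller _ G (hni.trans (Nat.zero_le _))
  | succ j ih =>
    intro n G hni hK
    classical
    set M := 2*K + 2*K * 2^(2*K) with hM
    by_cases hsmall : {v | ∃ u, G.Adj u v}.ncard ≤ M
    · exact exists_smaller M G hsmall
    push_neg at hsmall
    obtain ⟨C, π, hcov, hπ⟩ := exists_matched_cover G
    obtain ⟨R, hCR, hRg⟩ := matched_cover_le_guessing G C π hπ (le_refl 2)
    have hRK : R.card ≤ K := by
      have h1 : (R.card : ℝ) ≤ (K : ℝ) :=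
        hRg.trans ((guessing_le_graphEntropy G le_rfl).trans hK)
      exact_mod_cast h1
    have hCK : C.card ≤ 2*K := by omega
    set NI : Finset (Fin n) := Finset.univ.filter (fun v => ∃ u, G.Adj u v) with hNI
    have hNIcoe : (↑NI : Set (Fin n)) = {v | ∃ u, G.Adj u v} := by ext v; simp [hNI]
    have hNIcard : M < NI.card := by
      rw [← Set.ncard_coe_finset, hNIcoe]; exact hsmall
    set D : Finset (Fin n) := NI \ C with hD
    have hDcard : 2*K * 2^(2*K) < D.card := by
      have h1 : NI.card - C.card ≤ D.card := Finset.le_card_sdiff C NI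
      omega
    set nb : Fin n → Finset (Fin n) :=
      fun v => Finset.univ.filter (fun u => G.Adj u v) with hnbdef
    have hnbmem : ∀ u v, u ∈ nb v ↔ G.Adj u v := by intro u v; simp [hnbdef]
    have hmapsto : ∀ v ∈ D, nb v ∈ C.powerset := by
      intro v hv
      rw [Finset.mem_powerset]
      intro u hu
      rcases hcov u v ((hnbmem u v).mp hu) with h | h
      · exact h
      · exfalso
        rw [hD, Finset.mem_sdiff] at hv
        exact hv.2 h
    have hlt : C.powerset.card * (2*K) < D.card := by
      rw [Finset.card_powerset]
      calc 2 ^ C.card * (2*K) ≤ 2 ^ (2*K) * (2*K) :=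
            Nat.mul_le_mul_right _ (Nat.pow_le_pow_right (by norm_num) hCK)
        _ = 2*K * 2^(2*K) := by ring
        _ < D.card := hDcard
    obtain ⟨N₀, _, hfib⟩ :=
      Finset.exists_lt_card_fiber_of_mul_lt_card_of_maps_to hmapsto hlt
    set F := D.filter (fun v => nb v = N₀) with hF
    have hFne : F.Nonempty := Finset.card_pos.mp (by omega)
    obtain ⟨w, hwF⟩ := hFne
    set S := F.erase w with hS
    have hwS : w ∉ S := Finset.notMem_erase w F
    have hmapF : ∀ v ∈ F, nb v = N₀ := by
      intro v hv; exact (Finset.mem_filter.mp hv).2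
    have hnb2 : ∀ s ∈ S, ∀ u, G.Adj u s ↔ G.Adj u w := by
      intro s hs u
      have h1 : nb s = N₀ := hmapF s (Finset.mem_of_mem_erase hs)
      have h2 : nb w = N₀ := hmapF w hwF
      rw [← hnbmem u s, ← hnbmem u w, h1, h2]
    have hcard2 : {u | G.Adj u w}.ncard ≤ S.card := by
      have h1 : {u | G.Adj u w} = (↑(nb w) : Set (Fin n)) := by
        ext u; simp [hnbmem u w]
      have h2 : (nb w).card ≤ C.card :=
        Finset.card_le_card (Finset.mem_powerset.mp
          (hmapsto w (Finset.mem_filter.mp hwF).1))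
      have h3 : S.card = F.card - 1 := Finset.card_erase_of_mem hwF
      rw [h1, Set.ncard_coe_finset]
      omega
    set G₂ := isolateAt G w with hG₂
    have hguess : ∀ q, 2 ≤ q → guessing G q = guessing G₂ q := by
      intro q hq
      exact guessing_isolateAt G w S hwS hnb2 hcard2 hq
    have hent : graphEntropy G = graphEntropy G₂ := graphEntropy_congr hguess
    have hni2 : {v | ∃ u, G₂.Adj u v}.ncard ≤ j := by
      have hwNI : w ∈ NI := (Finset.mem_sdiff.mp (Finset.mem_filter.mp hwF).1).1
      have hsub : {v | ∃ u, G₂.Adj u v} ⊆ (↑(NI.erase w) : Set (Fin n)) := by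
        intro v hv
        obtain ⟨u, hu⟩ := hv
        simp only [Finset.coe_erase, Set.mem_diff, Set.mem_singleton_iff]
        constructor
        · rw [hNIcoe]; exact ⟨u, hu.1⟩
        · exact hu.2.2
      have h1 : {v | ∃ u, G₂.Adj u v}.ncard ≤ (NI.erase w).card := by
        rw [← Set.ncard_coe_finset]
        exact Set.ncard_le_ncard hsub (Set.toFinite _)
      have h2 : (NI.erase w).card = NI.card - 1 := Finset.card_erase_of_mem hwNI
      have h3 : NI.card ≤ j + 1 := by
        rw [← Set.ncard_coe_finset, hNIcoe]; exact hni
      omega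
    obtain ⟨m, G', hm, hG'⟩ := ih n G₂ hni2 (hent ▸ hK)
    exact ⟨m, G', hm, hG'.trans hent.symm⟩

end Reduce

theorem entropySet_inter_Icc_finite (k : ℤ) :
    (entropySet ∩ Set.Icc (0 : ℝ) (k : ℝ)).Finite := by
  by_cases hk : (k : ℝ) < 0
  · apply Set.Finite.subset Set.finite_empty
    rintro x ⟨_, hx0, hxk⟩
    exact absurd (hx0.trans hxk) (not_le.mpr hk)
  push_neg at hk
  have hk0 : 0 ≤ k := by exact_mod_cast hk
  set K := k.toNat with hK
  have hkK : (k : ℝ) ≤ (K : ℝ) := by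
    have h : ((K : ℤ) : ℝ) = (k : ℝ) := by rw [hK, Int.toNat_of_nonneg hk0]
    rw [← h]
    norm_num
  set M := 2*K + 2*K * 2^(2*K) with hM
  have hfin : (⋃ m ∈ Finset.range (M+1),
      Set.range (fun G' : SimpleGraph (Fin m) => graphEntropy G')).Finite := by
    apply Set.Finite.biUnion (Finset.range (M+1)).finite_toSet
    intro m _
    exact Set.finite_range _
  apply hfin.subset
  rintro x ⟨⟨n, G, hG⟩, hx0, hxk⟩
  have hent : graphEntropy G ≤ (K : ℝ) := by rw [hG]; exact hxk.trans hkK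
  have hni : {v | ∃ u, G.Adj u v}.ncard ≤ n := by
    have h1 : {v | ∃ u, G.Adj u v}.ncard ≤ (Set.univ : Set (Fin n)).ncard :=
      Set.ncard_le_ncard (Set.subset_univ _) Set.finite_univ
    rwa [Set.ncard_univ, Nat.card_eq_fintype_card, Fintype.card_fin] at h1
  obtain ⟨m, G', hm, hG'⟩ := main_reduce K n n G hni hent
  simp only [Set.mem_iUnion, Finset.mem_coe, Finset.mem_range, Set.mem_range]
  exact ⟨m, by omega, G', hG'.trans hG⟩

end
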